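/- Let A be a commutative ring, S a multiplicatively closed subset of A, and Q a strongly weakly S-primary ideal of A. If Q*Q ≠ 0 (the product of Q with itself is not the zero ideal), then Q is an S-primary ideal of A. -/

import Mathlib

/-- `Q` is *`S`-primary*: there is `s ∈ S` such that `x*y ∈ Q` implies
`s*x ∈ Q` or `s*y ∈ rad(Q)`. -/
def SPrimary {A : Type*} [CommRing A] (S : Set A) (Q : Ideal A) : Prop :=
  ∃ s ∈ S, ∀ x y : A, x * y ∈ Q → s * x ∈ Q ∨ s * y ∈ Q.radical

/-- `Q` is *strongly weakly `S`-primary*: there is `s ∈ S` such that for all ideals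
`I`, `J`, if `I*J ⊆ Q` and `I*J ≠ 0` then `s*I ⊆ Q` or `s*J ⊆ rad(Q)`. -/
def StronglyWeaklySPrimary {A : Type*} [CommRing A] (S : Set A) (Q : Ideal A) : Prop :=
  ∃ s ∈ S, ∀ I J : Ideal A, I * J ≤ Q → I * J ≠ ⊥ →
    (∀ x ∈ I, s * x ∈ Q) ∨ (∀ y ∈ J, s * y ∈ Q.radical)

theorem sPrimary_of_stronglyWeaklySPrimary {A : Type*} [CommRing A] (S : Set A)
    (hS : ∀ a ∈ S, ∀ b ∈ S, a * b ∈ S)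
    (Q : Ideal A) (hQS : (Q : Set A) ∩ S = ∅)
    (hQ : StronglyWeaklySPrimary S Q) (hQQ : Q * Q ≠ ⊥) :
    SPrimary S Q := by
  obtain ⟨s, hs, h⟩ := hQ
  refine ⟨s, hs, fun x y hxy => ?_⟩
  set I := Ideal.span {x} ⊔ Q with hI
  set J := Ideal.span {y} ⊔ Q with hJ
  have hIJ : I * J ≤ Q := by
    rw [hI, hJ, Ideal.sup_mul, Ideal.mul_sup, Ideal.mul_sup]
    refine sup_le (sup_le ?_ Ideal.mul_le_right) (sup_le Ideal.mul_le_left Ideal.mul_le_right)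
    rw [Ideal.span_singleton_mul_span_singleton]
    exact (Ideal.span_singleton_le_iff_mem Q).mpr hxy
  have hne : I * J ≠ ⊥ := fun hbot =>
    hQQ (le_bot_iff.mp (hbot ▸ Ideal.mul_mono le_sup_right le_sup_right))
  rcases h I J hIJ hne with h1 | h2
  · exact Or.inl (h1 x (le_sup_left (a := Ideal.span {x})
      (Ideal.subset_span (Set.mem_singleton x))))
  · exact Or.inr (h2 y (le_sup_left (a := Ideal.span {y})
      (Ideal.subset_span (Set.mem_singleton y))))
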